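/- arXiv:1811.06592 — 2 statements merged into one kernel-verified Lean document; each statement's English description precedes it below -/
import Mathlib

section
/- For all real α, ν and every real x the following two matrix identities hold, expressing that conjugation of the differential operator D^{(α,ν)} by L_μ^{(α)} yields the diagonal coefficients x, (ν+1)I + J − xI, and (α−ν)I − J: (i) ( −x(A_μ+I)^{−1} + (ν+1)I + J + (αI+J)A_μ ) · L_μ^{(α)}(x) = 2x · L_μ^{(α)}(x) · A_μ + L_μ^{(α)}(x) · ((ν+1)I + J − xI); (ii) ( (α−ν)(A_μ+I)^{−1} − J ) · L_μ^{(α)}(x) = x · L_μ^{(α)}(x) · A_μ² + L_μ^{(α)}(x) · A_μ · ((ν+1)I + J − xI) + L_μ^{(α)}(x) · ((α−ν)I − J). -/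
open scoped BigOperators
open Matrix MeasureTheory

noncomputable section

/-- Pochhammer symbol `(a)_m = a(a+1)⋯(a+m-1)`. -/
def poch (a : ℝ) (m : ℕ) : ℝ := ∏ i ∈ Finset.range m, (a + i)

/-- Generalized Laguerre polynomial `L_n^{(α)}(x)`. -/
def lagP (α : ℝ) (n : ℕ) (x : ℝ) : ℝ :=
  ∑ k ∈ Finset.range (n + 1),
    (-1 : ℝ) ^ k * poch (α + k + 1) (n - k) * x ^ k / ((n - k).factorial * k.factorial)

/-- The matrix `L_μ^{(α)}(x)`; the 0-based index pair `(i,j)` corresponds to the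
1-based index pair `(i+1, j+1)` of the paper. -/
def LagMat (N : ℕ) (μ : Fin N → ℝ) (α : ℝ) (x : ℝ) : Matrix (Fin N) (Fin N) ℝ :=
  Matrix.of fun m n : Fin N =>
    if (n : ℕ) ≤ (m : ℕ) then μ m / μ n * lagP (α + (n : ℕ) + 1) ((m : ℕ) - (n : ℕ)) x else 0

/-- The matrix `A_μ = S_μ A S_μ⁻¹`, written entrywise. -/
def AmuMat (N : ℕ) (μ : Fin N → ℝ) : Matrix (Fin N) (Fin N) ℝ :=
  Matrix.of fun i j : Fin N => if (i : ℕ) = (j : ℕ) + 1 then -(μ i / μ j) else 0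

/-- `J = diag(1,…,N)`. -/
def Jmat (N : ℕ) : Matrix (Fin N) (Fin N) ℝ :=
  Matrix.diagonal fun i => ((i : ℕ) + 1 : ℝ)

/-- `T^{(ν)}(x) = e^{-x} Σ_k δ_k x^{ν+k} E_{k,k}`. -/
def Tmat (N : ℕ) (δ : Fin N → ℝ) (ν : ℝ) (x : ℝ) : Matrix (Fin N) (Fin N) ℝ :=
  Matrix.diagonal fun k => Real.exp (-x) * δ k * x ^ (ν + (k : ℕ) + 1)

/-- The weight `W_μ^{(α,ν)}(x) = L_μ^{(α)}(x) T^{(ν)}(x) L_μ^{(α)}(x)^*`. -/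
def Wmat (N : ℕ) (μ δ : Fin N → ℝ) (α ν : ℝ) (x : ℝ) : Matrix (Fin N) (Fin N) ℝ :=
  LagMat N μ α x * Tmat N δ ν x * (LagMat N μ α x)ᵀ

/-- Entrywise evaluation of a matrix of polynomials. -/
def matPolyEval {N : ℕ} (P : Matrix (Fin N) (Fin N) (Polynomial ℝ)) (x : ℝ) :
    Matrix (Fin N) (Fin N) ℝ :=
  Matrix.of fun i j => (P i j).eval x

/-- Entrywise derivative of a matrix of polynomials. -/
def matPolyDeriv {N : ℕ} (P : Matrix (Fin N) (Fin N) (Polynomial ℝ)) :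
    Matrix (Fin N) (Fin N) (Polynomial ℝ) :=
  Matrix.of fun i j => Polynomial.derivative (P i j)

/-- `P` is the monic (matrix valued) orthogonal polynomial of degree `n` w.r.t. the
weight `W` on `(0,∞)`. -/
def MonicOrth (N : ℕ) (W : ℝ → Matrix (Fin N) (Fin N) ℝ) (n : ℕ)
    (P : Matrix (Fin N) (Fin N) (Polynomial ℝ)) : Prop :=
  (∀ i j, (P i j).degree ≤ n) ∧
  Matrix.of (fun i j => (P i j).coeff n) = (1 : Matrix (Fin N) (Fin N) ℝ) ∧
  ∀ k, k < n → ∀ i j, (∫ x in Set.Ioi (0 : ℝ), (matPolyEval P x * W x) i j * x ^ k) = 0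

/-- Conditions (C1) and (C2) at level `ν`, relating `δ = δ^{(ν)}`, `δ' = δ^{(ν+1)}`,
`c = c^{(ν)}` and `d = d^{(ν)}`. -/
def PearsonCond (N : ℕ) (μ δ δ' : Fin N → ℝ) (c d : ℝ) : Prop :=
  0 < c ∧ 0 < d ∧
  (∀ k : Fin N, δ' k = (((k : ℕ) + 1) * d + c) * δ k) ∧
  ∀ (k : Fin N) (h : (k : ℕ) + 1 < N),
    μ ⟨(k : ℕ) + 1, h⟩ ^ 2 / μ k ^ 2 =
      d * ((k : ℕ) + 1) * ((N : ℝ) - ((k : ℕ) + 1)) * δ ⟨(k : ℕ) + 1, h⟩ / δ' k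

/-- `Φ^{(α,ν)}(x)` (with `c = c^{(ν)}`, `d = d^{(ν)}`). -/
def PhiMat (N : ℕ) (μ : Fin N → ℝ) (α c d : ℝ) (x : ℝ) : Matrix (Fin N) (Fin N) ℝ :=
  ((LagMat N μ α 0)ᵀ)⁻¹ *
    (-(d * x ^ 2) • (AmuMat N μ)ᵀ + x • (d • Jmat N + c • (1 : Matrix (Fin N) (Fin N) ℝ))) *
    (LagMat N μ α 0)ᵀ

/-- `Ψ^{(α,ν)}(x)` (with `δ = δ^{(ν)}`, `δ' = δ^{(ν+1)}`, `c = c^{(ν)}`, `d = d^{(ν)}`). -/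
def PsiMat (N : ℕ) (μ δ δ' : Fin N → ℝ) (α ν c d : ℝ) (x : ℝ) : Matrix (Fin N) (Fin N) ℝ :=
  ((LagMat N μ α 0)ᵀ)⁻¹ *
    (x • (d • (Jmat N - (AmuMat N μ)ᵀ * (Jmat N + (ν + 1) • (1 : Matrix (Fin N) (Fin N) ℝ)) -
        ((N : ℝ) + 1) • (1 : Matrix (Fin N) (Fin N) ℝ)) - c • (1 : Matrix (Fin N) (Fin N) ℝ)) +
      (Jmat N + (ν + 1) • (1 : Matrix (Fin N) (Fin N) ℝ)) *
        (d • Jmat N + c • (1 : Matrix (Fin N) (Fin N) ℝ)) +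
      (Matrix.diagonal δ)⁻¹ * AmuMat N μ * Matrix.diagonal δ') *
    (LagMat N μ α 0)ᵀ

/-- `K_n^{(β,ν)}` (with `c = c^{(ν)}`, `d = d^{(ν)}`). -/
def Kmat (N : ℕ) (μ : Fin N → ℝ) (β ν c d : ℝ) (n : ℕ) : Matrix (Fin N) (Fin N) ℝ :=
  LagMat N μ β 0 *
    (d • (Jmat N - (Jmat N + (ν + n) • (1 : Matrix (Fin N) (Fin N) ℝ)) * AmuMat N μ -
      ((N : ℝ) + 1) • (1 : Matrix (Fin N) (Fin N) ℝ)) - c • (1 : Matrix (Fin N) (Fin N) ℝ)) *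
    (LagMat N μ β 0)⁻¹

/-- `(Q D^{(α,ν)})(x)` for a matrix valued polynomial `Q`. -/
def Dapply (N : ℕ) (μ : Fin N → ℝ) (α ν : ℝ)
    (Q : Matrix (Fin N) (Fin N) (Polynomial ℝ)) (x : ℝ) : Matrix (Fin N) (Fin N) ℝ :=
  x • matPolyEval (matPolyDeriv (matPolyDeriv Q)) x +
    matPolyEval (matPolyDeriv Q) x *
      ((-x) • (AmuMat N μ + 1)⁻¹ + (ν + 1) • (1 : Matrix (Fin N) (Fin N) ℝ) + Jmat N +
        (α • (1 : Matrix (Fin N) (Fin N) ℝ) + Jmat N) * AmuMat N μ) +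
    matPolyEval Q x * ((α - ν) • (AmuMat N μ + 1)⁻¹ - Jmat N)

-- AUX PART (to be appended after defs)
section Aux

lemma poch_zero (a : ℝ) : poch a 0 = 1 := by simp [poch]

lemma poch_succ (a : ℝ) (m : ℕ) : poch a (m+1) = poch a m * (a + m) := by
  simp [poch, Finset.prod_range_succ]

lemma poch_succ' (a : ℝ) (m : ℕ) : poch a (m+1) = a * poch (a+1) m := by
  rw [poch, Finset.prod_range_succ']
  rw [poch]; push_cast; rw [add_zero, mul_comm]
  congr 1; apply Finset.prod_congr rfl; intro i _; ring

lemma lagP_zero (a : ℝ) (x : ℝ) : lagP a 0 x = 1 := by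
  simp [lagP, poch]

lemma lagP_one (a : ℝ) (x : ℝ) : lagP a 1 x = a + 1 - x := by
  simp [lagP, Finset.sum_range_succ, poch]
  ring

lemma lagP_R1 (a x : ℝ) (n : ℕ) :
    lagP (a+1) (n+1) x = lagP a (n+1) x + lagP (a+1) n x := by
  unfold lagP
  rw [Finset.sum_range_succ, Finset.sum_range_succ
    (fun k => (-1 : ℝ) ^ k * poch (a + k + 1) (n + 1 - k) * x ^ k
      / ((n + 1 - k).factorial * k.factorial))]
  simp only [Nat.sub_self, poch_zero]
  have hsum : ∑ k ∈ Finset.range (n+1),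
      (-1 : ℝ) ^ k * poch (a + 1 + k + 1) (n + 1 - k) * x ^ k
        / ((n + 1 - k).factorial * k.factorial)
      = ∑ k ∈ Finset.range (n+1),
        ((-1 : ℝ) ^ k * poch (a + k + 1) (n + 1 - k) * x ^ k
          / ((n + 1 - k).factorial * k.factorial)
        + (-1 : ℝ) ^ k * poch (a + 1 + k + 1) (n - k) * x ^ k
          / ((n - k).factorial * k.factorial)) := by
    apply Finset.sum_congr rfl
    intro k hk
    have hk' : k ≤ n := Nat.lt_succ_iff.mp (Finset.mem_range.mp hk)
    obtain ⟨m, hm⟩ : ∃ m, n - k = m := ⟨n - k, rfl⟩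
    have h1 : n + 1 - k = m + 1 := by omega
    rw [hm, h1, poch_succ, poch_succ' (a + k + 1) m, Nat.factorial_succ]
    have hfm : ((m).factorial : ℝ) ≠ 0 := Nat.cast_ne_zero.mpr (Nat.factorial_ne_zero m)
    have hfk : ((k).factorial : ℝ) ≠ 0 := Nat.cast_ne_zero.mpr (Nat.factorial_ne_zero k)
    have hm1 : ((m : ℝ) + 1) ≠ 0 := by positivity
    have harg : a + k + 1 + 1 = a + 1 + k + 1 := by ring
    rw [harg]
    push_cast
    field_simp
    ring
  rw [hsum, Finset.sum_add_distrib]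
  ring

lemma lagP_R2 (a x : ℝ) (n : ℕ) :
    ((n:ℝ)+1) * lagP a (n+1) x = ((n:ℝ)+1+a) * lagP a n x - x * lagP (a+1) n x := by
  unfold lagP
  rw [Finset.mul_sum, Finset.mul_sum, Finset.mul_sum]
  conv_lhs => rw [Finset.sum_range_succ', Finset.sum_range_succ]
  conv_rhs => rw [Finset.sum_range_succ', Finset.sum_range_succ]
  have key : ∀ k ∈ Finset.range n,
      ((n:ℝ) + 1) *
        ((-1:ℝ) ^ (k + 1) * poch (a + ↑(k + 1) + 1) (n + 1 - (k + 1)) * x ^ (k + 1) /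
          (↑(n + 1 - (k + 1)).factorial * ↑(k + 1).factorial)) =
      ((n:ℝ) + 1 + a) *
        ((-1:ℝ) ^ (k + 1) * poch (a + ↑(k + 1) + 1) (n - (k + 1)) * x ^ (k + 1) /
          (↑(n - (k + 1)).factorial * ↑(k + 1).factorial)) -
      x * ((-1:ℝ) ^ k * poch (a + 1 + ↑k + 1) (n - k) * x ^ k /
          (↑(n - k).factorial * ↑k.factorial)) := by
    intro k hk
    have hk' : k < n := Finset.mem_range.mp hk
    obtain ⟨m, hm⟩ : ∃ m, n - (k+1) = m := ⟨_, rfl⟩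
    have e1 : n + 1 - (k+1) = m + 1 := by omega
    have e2 : n - k = m + 1 := by omega
    have harg : a + 1 + (k:ℝ) + 1 = a + ↑(k+1) + 1 := by push_cast; ring
    rw [e1, e2, hm, harg, poch_succ]
    have hn : (n:ℝ) = (m:ℝ) + k + 1 := by
      have : n = m + k + 1 := by omega
      exact_mod_cast congrArg (Nat.cast : ℕ → ℝ) this
    rw [Nat.factorial_succ m, Nat.factorial_succ k]
    push_cast
    rw [hn]
    field_simp
    ring
  rw [Finset.sum_congr rfl key, Finset.sum_sub_distrib]
  have h0 : ((n:ℝ) + 1) *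
      ((-1:ℝ) ^ 0 * poch (a + ↑(0:ℕ) + 1) (n + 1 - 0) * x ^ 0 /
        (↑(n + 1 - 0).factorial * ↑(Nat.factorial 0))) =
      ((n:ℝ) + 1 + a) *
      ((-1:ℝ) ^ 0 * poch (a + ↑(0:ℕ) + 1) (n - 0) * x ^ 0 /
        (↑(n - 0).factorial * ↑(Nat.factorial 0))) := by
    simp only [Nat.sub_zero, Nat.cast_zero, add_zero, pow_zero, one_mul,
      Nat.factorial_zero, Nat.cast_one, mul_one, poch_succ, Nat.factorial_succ]
    push_cast
    field_simp
    ring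
  have htop : ((n:ℝ) + 1) *
      ((-1:ℝ) ^ (n + 1) * poch (a + ↑(n + 1) + 1) (n + 1 - (n + 1)) * x ^ (n + 1) /
        (↑(n + 1 - (n + 1)).factorial * ↑(n + 1).factorial)) =
      - (x * ((-1:ℝ) ^ n * poch (a + 1 + ↑n + 1) (n - n) * x ^ n /
        (↑(n - n).factorial * ↑n.factorial))) := by
    simp only [Nat.sub_self, poch_zero, Nat.factorial_zero, Nat.cast_one, one_mul, mul_one,
      Nat.factorial_succ]
    push_cast
    field_simp
    ring
  linarith [h0, htop]

lemma lagP_sum (a x : ℝ) (p : ℕ) :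
    ∑ t ∈ Finset.range (p+1), lagP a t x = lagP (a+1) p x := by
  induction p with
  | zero => simp [lagP_zero]
  | succ p ih => rw [Finset.sum_range_succ, ih, lagP_R1]; ring

lemma scalar_i (a x : ℝ) (q : ℕ) :
    -x * lagP (a+1) (q+1) x + ((q:ℝ)+1) * lagP a (q+1) x - (a+(q:ℝ)+1) * lagP a q x
      = -(2*x) * lagP (a+1) q x - x * lagP a (q+1) x := by
  linear_combination lagP_R2 a x q - x * lagP_R1 a x q

lemma scalar_ii (a x : ℝ) (q : ℕ) :
    (a+1) * lagP (a+1) (q+1) x - ((q:ℝ)+2) * lagP a (q+1+1) x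
      = x * lagP (a+1+1) q x + x * lagP (a+1) (q+1) x := by
  have h2 := lagP_R2 a x (q+1)
  push_cast at h2
  linear_combination (-1) * h2 + (a+(q:ℝ)+2) * lagP_R1 a x q + (-1) * lagP_R2 (a+1) x q

def Bmat (N : ℕ) (μ : Fin N → ℝ) : Matrix (Fin N) (Fin N) ℝ :=
  Matrix.of fun i j : Fin N => if (j : ℕ) ≤ (i : ℕ) then μ i / μ j else 0

variable {N : ℕ} {μ : Fin N → ℝ}

lemma Amu_mul (M : Matrix (Fin N) (Fin N) ℝ) (i j : Fin N) :
    (AmuMat N μ * M) i j =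
      if h : 0 < (i : ℕ) then
        -(μ i / μ ⟨(i : ℕ) - 1, lt_of_le_of_lt (Nat.sub_le _ _) i.isLt⟩) *
          M ⟨(i : ℕ) - 1, lt_of_le_of_lt (Nat.sub_le _ _) i.isLt⟩ j
      else 0 := by
  rw [Matrix.mul_apply]
  split_ifs with h
  · rw [Finset.sum_eq_single (⟨(i : ℕ) - 1, lt_of_le_of_lt (Nat.sub_le _ _) i.isLt⟩ : Fin N)]
    · simp only [AmuMat, Matrix.of_apply]
      rw [if_pos (show (i : ℕ) = (i : ℕ) - 1 + 1 by omega)]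
    · intro k _ hk
      simp only [AmuMat, Matrix.of_apply]
      rw [if_neg, zero_mul]
      intro hik
      apply hk
      apply Fin.ext
      show (k : ℕ) = (i : ℕ) - 1
      omega
    · intro hmem; exact absurd (Finset.mem_univ _) hmem
  · apply Finset.sum_eq_zero
    intro k _
    simp only [AmuMat, Matrix.of_apply]
    rw [if_neg (by omega), zero_mul]

lemma mul_Amu (M : Matrix (Fin N) (Fin N) ℝ) (i j : Fin N) :
    (M * AmuMat N μ) i j =
      if h : (j : ℕ) + 1 < N then
        M i ⟨(j : ℕ) + 1, h⟩ * (-(μ ⟨(j : ℕ) + 1, h⟩ / μ j))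
      else 0 := by
  rw [Matrix.mul_apply]
  split_ifs with h
  · rw [Finset.sum_eq_single (⟨(j : ℕ) + 1, h⟩ : Fin N)]
    · simp only [AmuMat, Matrix.of_apply]
      simp
    · intro k _ hk
      simp only [AmuMat, Matrix.of_apply]
      rw [if_neg, mul_zero]
      intro hik
      exact hk (Fin.ext hik)
    · intro hmem; exact absurd (Finset.mem_univ _) hmem
  · apply Finset.sum_eq_zero
    intro k _
    simp only [AmuMat, Matrix.of_apply]
    rw [if_neg (by omega), mul_zero]

lemma Amu_inv_add_one (hμ : ∀ k, μ k ≠ 0) : (AmuMat N μ + 1)⁻¹ = Bmat N μ := by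
  apply Matrix.inv_eq_right_inv
  ext i j
  rw [Matrix.add_mul, Matrix.one_mul, Matrix.add_apply, Amu_mul]
  simp only [Bmat, Matrix.of_apply, Matrix.one_apply]
  by_cases h : 0 < (i : ℕ)
  · rw [dif_pos h]
    rcases lt_trichotomy (j : ℕ) (i : ℕ) with hj | hj | hj
    · rw [if_pos (show (j : ℕ) ≤ ((⟨(i : ℕ) - 1, lt_of_le_of_lt (Nat.sub_le _ _) i.isLt⟩ :
          Fin N) : ℕ) from by show (j : ℕ) ≤ (i : ℕ) - 1; omega),
        if_pos (le_of_lt hj),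
        if_neg (show ¬ i = j by intro hij; exact absurd (congrArg Fin.val hij) (by omega))]
      set i' : Fin N := ⟨(i : ℕ) - 1, lt_of_le_of_lt (Nat.sub_le _ _) i.isLt⟩ with hi'
      have h1 : μ i' ≠ 0 := hμ _
      have h2 : -(μ i / μ i') * (μ i' / μ j) + μ i / μ j
          = -((μ i' * μ i) / (μ i' * μ j)) + μ i / μ j := by
        rw [neg_mul, div_mul_div_comm, mul_comm (μ i) (μ i')]
      rw [h2, mul_div_mul_left _ _ h1, neg_add_cancel]
    · have hij : i = j := Fin.ext hj.symm
      rw [if_neg (show ¬ (j : ℕ) ≤ ((⟨(i : ℕ) - 1, lt_of_le_of_lt (Nat.sub_le _ _) i.isLt⟩ :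
          Fin N) : ℕ) from by show ¬ (j : ℕ) ≤ (i : ℕ) - 1; omega), mul_zero, zero_add, hij]
      simp [div_self (hμ j)]
    · rw [if_neg (show ¬ (j : ℕ) ≤ ((⟨(i : ℕ) - 1, lt_of_le_of_lt (Nat.sub_le _ _) i.isLt⟩ :
          Fin N) : ℕ) from by show ¬ (j : ℕ) ≤ (i : ℕ) - 1; omega),
        if_neg (by omega),
        if_neg (show ¬ i = j by intro hij; exact absurd (congrArg Fin.val hij) (by omega)),
        mul_zero, add_zero]
  · rw [dif_neg h, zero_add]
    by_cases hj : (j : ℕ) ≤ (i : ℕ)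
    · have hij : i = j := Fin.ext (by omega)
      rw [if_pos hj, if_pos hij, hij]
      exact div_self (hμ j)
    · rw [if_neg hj, if_neg (by intro hij; exact absurd (congrArg Fin.val hij) (by omega))]

lemma BL_entry (hμ : ∀ k, μ k ≠ 0) (α x : ℝ) (i j : Fin N) :
    (Bmat N μ * LagMat N μ α x) i j =
      if (j : ℕ) ≤ (i : ℕ) then
        μ i / μ j * lagP (α + (j : ℕ) + 1 + 1) ((i : ℕ) - (j : ℕ)) x
      else 0 := by
  rw [Matrix.mul_apply]
  have hterm : ∀ k : Fin N, Bmat N μ i k * LagMat N μ α x k j =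
      (fun t : ℕ => if (j : ℕ) ≤ t ∧ t ≤ (i : ℕ) then
        μ i / μ j * lagP (α + (j : ℕ) + 1) (t - (j : ℕ)) x else 0) (k : ℕ) := by
    intro k
    simp only [Bmat, LagMat, Matrix.of_apply]
    by_cases h1 : (k : ℕ) ≤ (i : ℕ) <;> by_cases h2 : (j : ℕ) ≤ (k : ℕ)
    · rw [if_pos h1, if_pos h2, if_pos ⟨h2, h1⟩]
      have h3 := hμ k
      have h4 := hμ j
      field_simp
    · rw [if_pos h1, if_neg h2, mul_zero,
        if_neg (show ¬((j : ℕ) ≤ (k : ℕ) ∧ (k : ℕ) ≤ (i : ℕ)) by omega)]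
    · rw [if_neg h1, zero_mul,
        if_neg (show ¬((j : ℕ) ≤ (k : ℕ) ∧ (k : ℕ) ≤ (i : ℕ)) by omega)]
    · rw [if_neg h1, zero_mul,
        if_neg (show ¬((j : ℕ) ≤ (k : ℕ) ∧ (k : ℕ) ≤ (i : ℕ)) by omega)]
  rw [Finset.sum_congr rfl (fun k _ => hterm k)]
  rw [Fin.sum_univ_eq_sum_range (fun t : ℕ => if (j : ℕ) ≤ t ∧ t ≤ (i : ℕ) then
        μ i / μ j * lagP (α + (j : ℕ) + 1) (t - (j : ℕ)) x else 0) N]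
  by_cases hij : (j : ℕ) ≤ (i : ℕ)
  · rw [if_pos hij]
    have hswap : ∀ t ∈ Finset.range N,
        (if (j : ℕ) ≤ t ∧ t ≤ (i : ℕ) then
          μ i / μ j * lagP (α + (j : ℕ) + 1) (t - (j : ℕ)) x else 0)
        = (if t ∈ Finset.Icc (j : ℕ) (i : ℕ) then
          μ i / μ j * lagP (α + (j : ℕ) + 1) (t - (j : ℕ)) x else 0) := by
      intro t _
      simp [Finset.mem_Icc]
    rw [Finset.sum_congr rfl hswap, Finset.sum_ite_mem]
    have hsub : Finset.Icc (j : ℕ) (i : ℕ) ⊆ Finset.range N := by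
      intro t ht
      rw [Finset.mem_Icc] at ht
      rw [Finset.mem_range]
      have := i.isLt
      omega
    rw [Finset.inter_eq_right.mpr hsub, ← Finset.Ico_add_one_right_eq_Icc, Finset.sum_Ico_eq_sum_range]
    have hcong : ∀ t ∈ Finset.range ((i : ℕ) + 1 - (j : ℕ)),
        μ i / μ j * lagP (α + (j : ℕ) + 1) ((j : ℕ) + t - (j : ℕ)) x
        = μ i / μ j * lagP (α + (j : ℕ) + 1) t x := by
      intro t _
      rw [Nat.add_sub_cancel_left]
    rw [Finset.sum_congr rfl hcong, ← Finset.mul_sum,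
      show (i : ℕ) + 1 - (j : ℕ) = ((i : ℕ) - (j : ℕ)) + 1 by omega, lagP_sum]
  · rw [if_neg hij]
    apply Finset.sum_eq_zero
    intro t _
    rw [if_neg (by omega)]

lemma AL_entry (hμ : ∀ k, μ k ≠ 0) (α x : ℝ) (i j : Fin N) :
    (AmuMat N μ * LagMat N μ α x) i j =
      if (j : ℕ) + 1 ≤ (i : ℕ) then
        -(μ i / μ j) * lagP (α + (j : ℕ) + 1) ((i : ℕ) - (j : ℕ) - 1) x
      else 0 := by
  rw [Amu_mul]
  by_cases h : 0 < (i : ℕ)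
  · rw [dif_pos h]
    set i' : Fin N := ⟨(i : ℕ) - 1, lt_of_le_of_lt (Nat.sub_le _ _) i.isLt⟩ with hi'
    have hv : (i' : ℕ) = (i : ℕ) - 1 := rfl
    simp only [LagMat, Matrix.of_apply]
    by_cases h2 : (j : ℕ) + 1 ≤ (i : ℕ)
    · rw [if_pos (show (j : ℕ) ≤ (i' : ℕ) from by rw [hv]; omega), if_pos h2]
      rw [show (i' : ℕ) - (j : ℕ) = (i : ℕ) - (j : ℕ) - 1 from by rw [hv]; omega]
      have h3 := hμ i'
      have h4 := hμ j
      field_simp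
    · rw [if_neg (show ¬ (j : ℕ) ≤ (i' : ℕ) from by rw [hv]; omega), if_neg h2, mul_zero]
  · rw [dif_neg h, if_neg (by omega)]

lemma LA_entry (hμ : ∀ k, μ k ≠ 0) (α x : ℝ) (i j : Fin N) :
    (LagMat N μ α x * AmuMat N μ) i j =
      if (j : ℕ) + 1 ≤ (i : ℕ) then
        -(μ i / μ j) * lagP (α + (j : ℕ) + 1 + 1) ((i : ℕ) - (j : ℕ) - 1) x
      else 0 := by
  rw [mul_Amu]
  by_cases h : (j : ℕ) + 1 < N
  · rw [dif_pos h]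
    set j' : Fin N := ⟨(j : ℕ) + 1, h⟩ with hj'
    have hv : (j' : ℕ) = (j : ℕ) + 1 := rfl
    simp only [LagMat, Matrix.of_apply]
    by_cases h2 : (j : ℕ) + 1 ≤ (i : ℕ)
    · rw [if_pos (show (j' : ℕ) ≤ (i : ℕ) from by rw [hv]; omega), if_pos h2]
      rw [show (i : ℕ) - (j' : ℕ) = (i : ℕ) - (j : ℕ) - 1 from by rw [hv]; omega]
      rw [show α + (((j' : ℕ) : ℕ) : ℝ) + 1 = α + ((j : ℕ) : ℝ) + 1 + 1 from by
        rw [hv]; push_cast; ring]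
      have h3 := hμ j'
      have h4 := hμ j
      field_simp
      try ring
    · rw [if_neg (show ¬ (j' : ℕ) ≤ (i : ℕ) from by rw [hv]; omega), if_neg h2, zero_mul]
  · rw [dif_neg h, if_neg (by have := i.isLt; omega)]

lemma LAA_entry (hμ : ∀ k, μ k ≠ 0) (α x : ℝ) (i j : Fin N) :
    (LagMat N μ α x * AmuMat N μ * AmuMat N μ) i j =
      if (j : ℕ) + 2 ≤ (i : ℕ) then
        μ i / μ j * lagP (α + (j : ℕ) + 1 + 1 + 1) ((i : ℕ) - (j : ℕ) - 2) x
      else 0 := by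
  rw [mul_Amu]
  by_cases h : (j : ℕ) + 1 < N
  · rw [dif_pos h]
    set j' : Fin N := ⟨(j : ℕ) + 1, h⟩ with hj'
    have hv : (j' : ℕ) = (j : ℕ) + 1 := rfl
    rw [LA_entry hμ]
    by_cases h2 : (j : ℕ) + 2 ≤ (i : ℕ)
    · rw [if_pos (show (j' : ℕ) + 1 ≤ (i : ℕ) from by rw [hv]; omega), if_pos h2]
      rw [show (i : ℕ) - (j' : ℕ) - 1 = (i : ℕ) - (j : ℕ) - 2 from by rw [hv]; omega]
      rw [show α + (((j' : ℕ) : ℕ) : ℝ) + 1 + 1 = α + ((j : ℕ) : ℝ) + 1 + 1 + 1 from by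
        rw [hv]; push_cast; ring]
      have h3 := hμ j'
      have h4 := hμ j
      field_simp
      try ring
    · rw [if_neg (show ¬ (j' : ℕ) + 1 ≤ (i : ℕ) from by rw [hv]; omega), if_neg h2, zero_mul]
  · rw [dif_neg h, if_neg (by have := i.isLt; omega)]

end Aux

/-- conjugation of `D^{(α,ν)}` by `L_μ^{(α)}` yields diagonal coefficients. -/
theorem conjugation_identities (N : ℕ) (hN : 1 ≤ N) (μ : Fin N → ℝ) (hμ : ∀ k, μ k ≠ 0)
    (α ν x : ℝ) :
    (((-x) • (AmuMat N μ + 1)⁻¹ + (ν + 1) • (1 : Matrix (Fin N) (Fin N) ℝ) + Jmat N +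
          (α • (1 : Matrix (Fin N) (Fin N) ℝ) + Jmat N) * AmuMat N μ) * LagMat N μ α x =
        (2 * x) • (LagMat N μ α x * AmuMat N μ) +
          LagMat N μ α x *
            ((ν + 1) • (1 : Matrix (Fin N) (Fin N) ℝ) + Jmat N -
              x • (1 : Matrix (Fin N) (Fin N) ℝ))) ∧
    (((α - ν) • (AmuMat N μ + 1)⁻¹ - Jmat N) * LagMat N μ α x =
        x • (LagMat N μ α x * AmuMat N μ ^ 2) +
          LagMat N μ α x * AmuMat N μ *
            ((ν + 1) • (1 : Matrix (Fin N) (Fin N) ℝ) + Jmat N -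
              x • (1 : Matrix (Fin N) (Fin N) ℝ)) +
          LagMat N μ α x *
            ((α - ν) • (1 : Matrix (Fin N) (Fin N) ℝ) - Jmat N)) := by

  have hJ : Jmat N = Matrix.diagonal (fun n : Fin N => ((n : ℕ) + 1 : ℝ)) := rfl
  have hDα : α • (1 : Matrix (Fin N) (Fin N) ℝ) + Jmat N =
      Matrix.diagonal (fun n : Fin N => α + ((n : ℕ) + 1)) := by
    ext i j
    rcases eq_or_ne i j with rfl | hne
    · simp [Jmat]
    · simp [Jmat, Matrix.one_apply_ne hne, Matrix.diagonal_apply_ne _ hne]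
  have hD1 : (ν + 1) • (1 : Matrix (Fin N) (Fin N) ℝ) + Jmat N -
      x • (1 : Matrix (Fin N) (Fin N) ℝ) =
      Matrix.diagonal (fun n : Fin N => ν + 1 + ((n : ℕ) + 1) - x) := by
    ext i j
    rcases eq_or_ne i j with rfl | hne
    · simp [Jmat]
    · simp [Jmat, Matrix.one_apply_ne hne, Matrix.diagonal_apply_ne _ hne]
  have hD2 : (α - ν) • (1 : Matrix (Fin N) (Fin N) ℝ) - Jmat N =
      Matrix.diagonal (fun n : Fin N => α - ν - ((n : ℕ) + 1)) := by
    ext i j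
    rcases eq_or_ne i j with rfl | hne
    · simp [Jmat]
    · simp [Jmat, Matrix.one_apply_ne hne, Matrix.diagonal_apply_ne _ hne]
  constructor
  · rw [Amu_inv_add_one hμ, hDα, hD1, hJ, Matrix.add_mul, Matrix.add_mul, Matrix.add_mul,
      Matrix.smul_mul, Matrix.smul_mul, Matrix.one_mul, Matrix.mul_assoc]
    ext i j
    simp only [Matrix.add_apply, Matrix.smul_apply, Matrix.diagonal_mul, Matrix.mul_diagonal,
      smul_eq_mul]
    rw [BL_entry hμ, AL_entry hμ, LA_entry hμ]
    simp only [LagMat, Matrix.of_apply]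
    by_cases hij : (j : ℕ) ≤ (i : ℕ)
    · rcases Nat.lt_or_ge (i : ℕ) ((j : ℕ) + 1) with hp | hp
      · have he : (i : ℕ) = (j : ℕ) := by omega
        simp only [if_pos hij, if_neg (show ¬ ((j : ℕ) + 1 ≤ (i : ℕ)) by omega)]
        rw [show (i : ℕ) - (j : ℕ) = 0 by omega]
        simp only [lagP_zero]
        have hcast : (((i : ℕ) : ℝ)) = (((j : ℕ) : ℝ)) := by exact_mod_cast he
        linear_combination (μ i / μ j) * hcast
      · obtain ⟨q, hq⟩ : ∃ q, (i : ℕ) - (j : ℕ) = q + 1 := ⟨(i : ℕ) - (j : ℕ) - 1, by omega⟩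
        simp only [if_pos hij, if_pos (show (j : ℕ) + 1 ≤ (i : ℕ) by omega)]
        rw [show (i : ℕ) - (j : ℕ) - 1 = q by omega, hq]
        have hcast : (((i : ℕ) : ℝ)) = (((j : ℕ) : ℝ)) + (q : ℝ) + 1 := by
          have h' : (i : ℕ) = (j : ℕ) + q + 1 := by omega
          exact_mod_cast h'
        linear_combination (μ i / μ j) * scalar_i (α + ((j : ℕ) : ℝ) + 1) x q
          + (μ i / μ j) * (lagP (α + ((j : ℕ) : ℝ) + 1) (q + 1) x
            - lagP (α + ((j : ℕ) : ℝ) + 1) q x) * hcast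
    · simp only [if_neg hij, if_neg (show ¬ ((j : ℕ) + 1 ≤ (i : ℕ)) by omega)]
      ring
  · rw [Amu_inv_add_one hμ, hD1, hD2, hJ, Matrix.sub_mul, Matrix.smul_mul,
      pow_two, ← Matrix.mul_assoc]
    ext i j
    simp only [Matrix.sub_apply, Matrix.add_apply, Matrix.smul_apply, Matrix.diagonal_mul,
      Matrix.mul_diagonal, smul_eq_mul]
    rw [BL_entry hμ, LAA_entry hμ, LA_entry hμ]
    simp only [LagMat, Matrix.of_apply]
    by_cases hij : (j : ℕ) ≤ (i : ℕ)
    · rcases Nat.lt_or_ge (i : ℕ) ((j : ℕ) + 1) with hp | hp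
      · -- i = j
        simp only [if_pos hij, if_neg (show ¬ ((j : ℕ) + 1 ≤ (i : ℕ)) by omega),
          if_neg (show ¬ ((j : ℕ) + 2 ≤ (i : ℕ)) by omega)]
        rw [show (i : ℕ) - (j : ℕ) = 0 by omega]
        simp only [lagP_zero]
        have hcast : (((i : ℕ) : ℝ)) = (((j : ℕ) : ℝ)) := by
          exact_mod_cast (show (i : ℕ) = (j : ℕ) by omega)
        linear_combination (-(μ i / μ j)) * hcast
      · rcases Nat.lt_or_ge (i : ℕ) ((j : ℕ) + 2) with hp2 | hp2
        · -- i = j + 1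
          simp only [if_pos hij, if_pos (show (j : ℕ) + 1 ≤ (i : ℕ) by omega),
            if_neg (show ¬ ((j : ℕ) + 2 ≤ (i : ℕ)) by omega)]
          rw [show (i : ℕ) - (j : ℕ) - 1 = 0 by omega, show (i : ℕ) - (j : ℕ) = 1 by omega]
          simp only [lagP_zero, lagP_one]
          have hcast : (((i : ℕ) : ℝ)) = (((j : ℕ) : ℝ)) + 1 := by
            exact_mod_cast (show (i : ℕ) = (j : ℕ) + 1 by omega)
          linear_combination (-(μ i / μ j)) * (α + ((j : ℕ) : ℝ) + 2 - x) * hcast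
        · -- i ≥ j + 2
          obtain ⟨q, hq⟩ : ∃ q, (i : ℕ) - (j : ℕ) = q + 1 + 1 :=
            ⟨(i : ℕ) - (j : ℕ) - 2, by omega⟩
          simp only [if_pos hij, if_pos (show (j : ℕ) + 1 ≤ (i : ℕ) by omega),
            if_pos (show (j : ℕ) + 2 ≤ (i : ℕ) by omega)]
          rw [show (i : ℕ) - (j : ℕ) - 2 = q by omega,
            show (i : ℕ) - (j : ℕ) - 1 = q + 1 by omega, hq]
          have hcast : (((i : ℕ) : ℝ)) = (((j : ℕ) : ℝ)) + (q : ℝ) + 2 := by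
            exact_mod_cast (show (i : ℕ) = (j : ℕ) + q + 2 by omega)
          linear_combination (μ i / μ j) * (α - ν) * lagP_R1 (α + ((j : ℕ) : ℝ) + 1) x (q + 1)
            + (μ i / μ j) * scalar_ii (α + ((j : ℕ) : ℝ) + 1) x q
            - (μ i / μ j) * lagP (α + ((j : ℕ) : ℝ) + 1) (q + 1 + 1) x * hcast
    · simp only [if_neg hij, if_neg (show ¬ ((j : ℕ) + 1 ≤ (i : ℕ)) by omega),
        if_neg (show ¬ ((j : ℕ) + 2 ≤ (i : ℕ)) by omega)]
      ring
end
end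

section
/- Let α > 0, ν > 0, δ_k^{(ν)} > 0 for all k, and assume condition (C1) holds at level ν (which defines positive reals δ_k^{(ν+1)} = (k d^{(ν)} + c^{(ν)}) δ_k^{(ν)}). Then for every x > 0, W_μ^{(α,ν+1)}(x) = W_μ^{(α,ν)}(x) · Φ^{(α,ν)}(x), where Φ^{(α,ν)}(x) = (L_μ^{(α)}(0)^*)^{−1} ( −d^{(ν)} x² A_μ^* + x (d^{(ν)} J + c^{(ν)} I) ) L_μ^{(α)}(0)^*. In particular (W_μ^{(α,ν)}(x))^{−1} W_μ^{(α,ν+1)}(x) is a matrix polynomial of degree two in x. -/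
open scoped BigOperators
open Matrix MeasureTheory

noncomputable section

/-- Auxiliary matrix `E(x) = exp(x A_μ)` written entrywise. -/
def Emat (N : ℕ) (μ : Fin N → ℝ) (x : ℝ) : Matrix (Fin N) (Fin N) ℝ :=
  Matrix.of fun m n : Fin N =>
    if (n : ℕ) ≤ (m : ℕ) then
      μ m / μ n * ((-x) ^ ((m : ℕ) - (n : ℕ)) / ((m : ℕ) - (n : ℕ)).factorial)
    else 0

lemma lagP_at_zero (β : ℝ) (n : ℕ) : lagP β n 0 = poch (β + 1) n / n.factorial := by
  unfold lagP
  rw [Finset.sum_eq_single 0]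
  · simp
  · intro b _ hb
    simp [zero_pow hb]
  · simp

lemma lagP_deg_zero (β y : ℝ) : lagP β 0 y = 1 := by
  unfold lagP
  simp [poch]

lemma lag_factor (N : ℕ) (μ : Fin N → ℝ) (hμ : ∀ k, μ k ≠ 0) (α x : ℝ) :
    LagMat N μ α x = LagMat N μ α 0 * Emat N μ x := by
  ext m n
  rw [Matrix.mul_apply]
  simp only [LagMat, Emat, Matrix.of_apply]
  by_cases hmn : (n : ℕ) ≤ (m : ℕ)
  · rw [if_pos hmn]
    have hsum : ∑ p : Fin N,
        (if (p : ℕ) ≤ (m : ℕ) then μ m / μ p * lagP (α + (p : ℕ) + 1) ((m : ℕ) - (p : ℕ)) 0 else 0) *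
          (if (n : ℕ) ≤ (p : ℕ) then μ p / μ n * ((-x) ^ ((p : ℕ) - (n : ℕ)) / ((p : ℕ) - (n : ℕ)).factorial) else 0)
        = ∑ p ∈ Finset.univ.filter (fun p : Fin N => (n : ℕ) ≤ (p : ℕ) ∧ (p : ℕ) ≤ (m : ℕ)),
            (μ m / μ p * lagP (α + (p : ℕ) + 1) ((m : ℕ) - (p : ℕ)) 0) *
              (μ p / μ n * ((-x) ^ ((p : ℕ) - (n : ℕ)) / ((p : ℕ) - (n : ℕ)).factorial)) := by
      rw [Finset.sum_filter]
      apply Finset.sum_congr rfl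
      intro p _
      by_cases h1 : (p : ℕ) ≤ (m : ℕ) <;> by_cases h2 : (n : ℕ) ≤ (p : ℕ) <;>
        simp [h1, h2]
    rw [hsum, lagP, Finset.mul_sum]
    refine Finset.sum_bij' (i := fun k (hk : k ∈ Finset.range ((m : ℕ) - (n : ℕ) + 1)) =>
        (⟨(n : ℕ) + k, by
          have hk' := Finset.mem_range.mp hk
          have := m.isLt
          omega⟩ : Fin N))
      (j := fun p _ => (p : ℕ) - (n : ℕ)) ?hi ?hj ?left ?right ?val
    case hi =>
      intro k hk
      have hk' := Finset.mem_range.mp (hk)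
      simp only [Finset.mem_filter, Finset.mem_univ, true_and]
      exact ⟨by omega, by omega⟩
    case hj =>
      intro p hp
      have hp' := (Finset.mem_filter.mp hp).2
      show (p : ℕ) - (n : ℕ) ∈ Finset.range ((m : ℕ) - (n : ℕ) + 1)
      rw [Finset.mem_range]
      omega
    case left =>
      intro k hk
      have hk' := Finset.mem_range.mp hk
      simp only [Fin.val_mk]
      omega
    case right =>
      intro p hp
      have hp' := (Finset.mem_filter.mp hp).2
      apply Fin.ext
      simp only [Fin.val_mk]
      omega
    case val =>
      intro k hk
      have hk' := Finset.mem_range.mp hk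
      have hkm : (n : ℕ) + k ≤ (m : ℕ) := by omega
      rw [lagP_at_zero]
      have e1 : ((n : ℕ) + k) - (n : ℕ) = k := by omega
      have e2 : (m : ℕ) - (n : ℕ) - k = (m : ℕ) - ((n : ℕ) + k) := by omega
      simp only [Fin.val_mk, e1, e2]
      have e3 : α + (n : ℕ) + 1 + (k : ℝ) + 1 = α + (((n : ℕ) + k : ℕ) : ℝ) + 1 + 1 := by
        push_cast; ring
      rw [e3]
      have hμp : μ (⟨(n : ℕ) + k, by have := m.isLt; omega⟩ : Fin N) ≠ 0 := hμ _
      have hf1 : (((m : ℕ) - ((n : ℕ) + k)).factorial : ℝ) ≠ 0 := by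
        exact_mod_cast ((m : ℕ) - ((n : ℕ) + k)).factorial_ne_zero
      have hf2 : ((k.factorial : ℝ)) ≠ 0 := by exact_mod_cast k.factorial_ne_zero
      have cancel : ∀ w A B : ℝ, w ≠ 0 → (μ m / w * A) * (w / μ n * B) = μ m / μ n * (A * B) := by
        intro w A B hw
        have h1 : μ m / w * A * (w / μ n * B) = μ m / μ n * (A * B) * (w * w⁻¹) := by
          ring
        rw [h1, mul_inv_cancel₀ hw, mul_one]
      rw [cancel _ _ _ (hμ _)]
      congr 1
      rw [neg_pow x k]
      field_simp
  · rw [if_neg hmn]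
    symm
    apply Finset.sum_eq_zero
    intro p _
    by_cases h1 : (p : ℕ) ≤ (m : ℕ)
    · by_cases h2 : (n : ℕ) ≤ (p : ℕ)
      · omega
      · rw [if_neg h2, mul_zero]
    · rw [if_neg h1, zero_mul]

lemma Emat_comm (N : ℕ) (μ : Fin N → ℝ) (hμ : ∀ k, μ k ≠ 0) (x : ℝ) :
    Jmat N * Emat N μ x = Emat N μ x * Jmat N + x • (AmuMat N μ * Emat N μ x) := by
  ext m n
  simp only [Jmat, Matrix.add_apply, Matrix.smul_apply, Matrix.diagonal_mul,
    Matrix.mul_diagonal, smul_eq_mul]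
  have key : (((m : ℕ) : ℝ) - ((n : ℕ) : ℝ)) * Emat N μ x m n =
      x * (AmuMat N μ * Emat N μ x) m n := by
    rw [Matrix.mul_apply]
    by_cases hm0 : (m : ℕ) = 0
    · have hz : ∀ p ∈ Finset.univ, AmuMat N μ m p * Emat N μ x p n = 0 := by
        intro p _
        have : ¬ ((m : ℕ) = (p : ℕ) + 1) := by omega
        have hA : AmuMat N μ m p = 0 := by
          simp only [AmuMat, Matrix.of_apply]
          exact if_neg this
        rw [hA, zero_mul]
      rw [Finset.sum_eq_zero hz, mul_zero]
      by_cases h2 : (n : ℕ) ≤ (m : ℕ)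
      · have : n = m := Fin.ext (by omega)
        subst this
        ring
      · have hEz : Emat N μ x m n = 0 := by
          simp only [Emat, Matrix.of_apply]
          exact if_neg h2
        rw [hEz, mul_zero]
    · have hm1 : (m : ℕ) - 1 < N := by have := m.isLt; omega
      set p₀ : Fin N := ⟨(m : ℕ) - 1, hm1⟩ with hp₀
      rw [Finset.sum_eq_single p₀]
      · have hcond : (m : ℕ) = (p₀ : ℕ) + 1 := by
          have : (p₀ : ℕ) = (m : ℕ) - 1 := rfl
          omega
        simp only [AmuMat, Matrix.of_apply, if_pos hcond]
        by_cases h1 : (n : ℕ) ≤ (m : ℕ) - 1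
        · have h2 : (n : ℕ) ≤ (m : ℕ) := by omega
          have h1' : (n : ℕ) ≤ (p₀ : ℕ) := by
            have : (p₀ : ℕ) = (m : ℕ) - 1 := rfl
            omega
          simp only [Emat, Matrix.of_apply, if_pos h1', if_pos h2]
          set a : ℕ := (m : ℕ) - (n : ℕ) with ha
          have ha1 : 1 ≤ a := by omega
          have e1 : (m : ℕ) - 1 - (n : ℕ) = a - 1 := by omega
          rw [e1]
          have e2 : ((m : ℕ) : ℝ) - ((n : ℕ) : ℝ) = (a : ℝ) := by
            rw [ha]; push_cast [Nat.cast_sub (by omega : (n:ℕ) ≤ (m:ℕ))]; ring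
          rw [e2]
          have e3 : a = (a - 1) + 1 := by omega
          have e4 : (-x) ^ a = (-x) ^ (a - 1) * (-x) := by
            conv_lhs => rw [e3]
            rw [pow_succ]
          have e5 : (a.factorial : ℝ) = (a : ℝ) * ((a-1).factorial : ℝ) := by
            have h5 : a.factorial = a * (a-1).factorial := by
              conv_lhs => rw [e3]
              rw [Nat.factorial_succ, ← e3]
            rw [h5]
            push_cast
            ring
          rw [e4, e5]
          have hfa : ((a - 1).factorial : ℝ) ≠ 0 := by exact_mod_cast (a-1).factorial_ne_zero
          have hμm : μ m ≠ 0 := hμ m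
          have hμn : μ n ≠ 0 := hμ n
          have hμp : μ p₀ ≠ 0 := hμ p₀
          have haR : (a : ℝ) ≠ 0 := by exact_mod_cast (by omega : a ≠ 0)
          field_simp
        · have hp0 : ¬ ((n : ℕ) ≤ (p₀ : ℕ)) := by
            have : (p₀ : ℕ) = (m : ℕ) - 1 := rfl
            omega
          simp only [Emat, Matrix.of_apply, if_neg hp0, mul_zero]
          by_cases h2 : (n : ℕ) ≤ (m : ℕ)
          · have : n = m := Fin.ext (by omega)
            subst this
            ring
          · rw [if_neg h2]
            ring
      · intro p _ hp
        have : ¬ ((m : ℕ) = (p : ℕ) + 1) := by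
          intro h
          apply hp
          apply Fin.ext
          show (p : ℕ) = (p₀ : ℕ)
          have : (p₀ : ℕ) = (m : ℕ) - 1 := rfl
          omega
        have hA : AmuMat N μ m p = 0 := by
          simp only [AmuMat, Matrix.of_apply]
          exact if_neg this
        rw [hA, zero_mul]
      · intro h
        exact absurd (Finset.mem_univ p₀) h
  have expand : ((m : ℕ) + 1 : ℝ) * Emat N μ x m n =
      Emat N μ x m n * ((n : ℕ) + 1 : ℝ) + (((m : ℕ) : ℝ) - ((n : ℕ) : ℝ)) * Emat N μ x m n := by
    ring
  rw [expand, key]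

lemma LagMat_zero_det (N : ℕ) (μ : Fin N → ℝ) (hμ : ∀ k, μ k ≠ 0) (α : ℝ) :
    (LagMat N μ α 0).det = 1 := by
  rw [Matrix.det_of_lowerTriangular (LagMat N μ α 0)
    (by
      intro i j hij
      have hlt : i < j := OrderDual.toDual_lt_toDual.mp hij
      have hlt' : (i : ℕ) < (j : ℕ) := Fin.lt_def.mp hlt
      exact if_neg (by omega))]
  apply Finset.prod_eq_one
  intro i _
  simp only [LagMat, Matrix.of_apply, if_pos le_rfl, Nat.sub_self, lagP_deg_zero,
    mul_one]
  exact div_self (hμ i)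

/-- the first Pearson equation `W^{(α,ν+1)} = W^{(α,ν)} Φ^{(α,ν)}`. -/
theorem pearson_Phi (N : ℕ) (hN : 1 ≤ N) (μ : Fin N → ℝ) (hμ : ∀ k, μ k ≠ 0)
    (α ν : ℝ) (hα : 0 < α) (hν : 0 < ν) (δ δ' : Fin N → ℝ) (hδ : ∀ k, 0 < δ k)
    (c d : ℝ) (hc : 0 < c) (hd : 0 < d)
    (hC1 : ∀ k : Fin N, δ' k = (((k : ℕ) + 1) * d + c) * δ k)
    (x : ℝ) (hx : 0 < x) :
    Wmat N μ δ' α (ν + 1) x = Wmat N μ δ α ν x * PhiMat N μ α c d x := by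
  set L0 := LagMat N μ α 0 with hL0
  set E := Emat N μ x with hE
  set X := x • (d • Jmat N + c • (1 : Matrix (Fin N) (Fin N) ℝ)) with hX
  set Y := -(d * x ^ 2) • (AmuMat N μ)ᵀ + X with hY
  -- T-step
  have hXdiag : X = Matrix.diagonal (fun k : Fin N => x * (d * ((k : ℕ) + 1) + c)) := by
    rw [hX, Jmat]
    ext i j
    by_cases h : i = j
    · subst h
      simp only [Matrix.smul_apply, Matrix.add_apply, Matrix.diagonal_apply_eq,
        Matrix.one_apply_eq, smul_eq_mul]
      ring
    · simp [Matrix.diagonal_apply_ne _ h, Matrix.one_apply_ne h]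
  have hT : Tmat N δ' (ν + 1) x = Tmat N δ ν x * X := by
    rw [hXdiag]
    ext i j
    rw [Tmat, Tmat, Matrix.diagonal_mul_diagonal]
    by_cases h : i = j
    · subst h
      simp only [Matrix.diagonal_apply_eq]
      rw [hC1 i]
      have e : ν + 1 + ((i : ℕ) : ℝ) + 1 = (ν + ((i : ℕ) : ℝ) + 1) + 1 := by ring
      rw [e, Real.rpow_add_one hx.ne']
      ring
    · simp [Matrix.diagonal_apply_ne _ h]
  -- factorization
  have hfac : LagMat N μ α x = L0 * E := lag_factor N μ hμ α x
  -- commutation (transposed)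
  have hcommT : X * Eᵀ = Eᵀ * Y := by
    have h := congrArg Matrix.transpose (Emat_comm N μ hμ x)
    rw [← hE] at h
    simp only [Matrix.transpose_mul, Matrix.transpose_add, Matrix.transpose_smul] at h
    -- h : Eᵀ * J = J * Eᵀ + x • (Eᵀ * Aᵀ)
    have hJt : (Jmat N)ᵀ = Jmat N := Matrix.diagonal_transpose _
    rw [hJt] at h
    have hJE : Jmat N * Eᵀ = Eᵀ * Jmat N - x • (Eᵀ * (AmuMat N μ)ᵀ) :=
      eq_sub_of_add_eq h.symm
    rw [hY, hX]
    simp only [smul_mul_assoc, add_mul, one_mul, Matrix.mul_add, Matrix.mul_smul,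
      Matrix.mul_one, hJE]
    module
  -- invertibility of L0ᵀ
  have hunit : IsUnit (L0ᵀ).det := by
    rw [Matrix.det_transpose, hL0, LagMat_zero_det N μ hμ α]
    exact isUnit_one
  have hcancel : L0ᵀ * ((L0ᵀ)⁻¹ * (Y * L0ᵀ)) = Y * L0ᵀ := by
    rw [← Matrix.mul_assoc, Matrix.mul_nonsing_inv _ hunit, Matrix.one_mul]
  -- assembly
  rw [Wmat, Wmat, PhiMat, hT, hfac]
  rw [show (L0 * E)ᵀ = Eᵀ * L0ᵀ from Matrix.transpose_mul _ _]
  rw [← hL0, ← hX, ← hY]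
  simp only [Matrix.mul_assoc]
  rw [hcancel, ← Matrix.mul_assoc X Eᵀ L0ᵀ, hcommT, Matrix.mul_assoc]
end
end
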